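/- For integers m, n > 1, the sparing number of the (m,n)-friendship graph K_1 + mP_n is m·⌊(n+1)/2⌋, where P_n denotes the path of length n (with n edges). -/

import Mathlib

open Pointwise

/-- The induced set-label on (potential) edges: the sumset of the end-vertex labels. -/
def edgeLabel {V : Type*} (f : V → Finset ℕ) : Sym2 V → Finset ℕ :=
  Sym2.lift ⟨fun u v => f u + f v, fun u v => add_comm (f u) (f v)⟩

/-- An integer additive set-indexer (IASI) of a simple graph `G`: an injective assignment
of nonempty finite sets of non-negative integers to the vertices such that the induced
sumset-labeling of the edges is also injective. -/
structure IsIASI {V : Type*} (G : SimpleGraph V) (f : V → Finset ℕ) : Prop where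
  nonempty : ∀ v, (f v).Nonempty
  inj : Function.Injective f
  edgeInj : Set.InjOn (edgeLabel f) G.edgeSet

/-- A weak IASI: an IASI for which every edge label has cardinality equal to the maximum of
the cardinalities of the labels of its end vertices. -/
structure IsWeakIASI {V : Type*} (G : SimpleGraph V) (f : V → Finset ℕ) extends
    IsIASI G f : Prop where
  weak : ∀ ⦃u v⦄, G.Adj u v → (f u + f v).card = max (f u).card (f v).card

/-- The number of mono-indexed edges of `G` under the labeling `f`, i.e. the number of
edges whose set-label is a singleton. -/
noncomputable def monoEdgeCount {V : Type*} (G : SimpleGraph V) (f : V → Finset ℕ) : ℕ :=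
  {e ∈ G.edgeSet | (edgeLabel f e).card = 1}.ncard

/-- The sparing number of `G`: the minimum number of mono-indexed edges taken over all
weak IASIs of `G`. -/
noncomputable def sparingNumber {V : Type*} (G : SimpleGraph V) : ℕ :=
  sInf {k | ∃ f : V → Finset ℕ, IsWeakIASI G f ∧ monoEdgeCount G f = k}

/-- The join `G + H` of two graphs on disjoint vertex sets: all vertices and edges of
`G` and `H`, together with every edge joining a vertex of `G` to a vertex of `H`. -/
def graphJoin {V W : Type*} (G : SimpleGraph V) (H : SimpleGraph W) :
    SimpleGraph (V ⊕ W) where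
  Adj x y :=
    match x, y with
    | Sum.inl a, Sum.inl b => G.Adj a b
    | Sum.inr a, Sum.inr b => H.Adj a b
    | Sum.inl _, Sum.inr _ => True
    | Sum.inr _, Sum.inl _ => True
  symm := by
    constructor
    rintro (a | a) (b | b) h
    · exact h.symm
    · trivial
    · trivial
    · exact h.symm
  loopless := by
    constructor
    rintro (a | a) h
    · exact G.irrefl h
    · exact H.irrefl h

/-- The disjoint union `mG` of `m` copies of the graph `G`. -/
def graphCopies {V : Type*} (m : ℕ) (G : SimpleGraph V) : SimpleGraph (Fin m × V) where
  Adj x y := x.1 = y.1 ∧ G.Adj x.2 y.2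
  symm := by
    constructor
    rintro ⟨i, u⟩ ⟨j, v⟩ ⟨h1, h2⟩
    exact ⟨h1.symm, h2.symm⟩
  loopless := by
    constructor
    rintro ⟨i, u⟩ ⟨-, h⟩
    exact G.irrefl h


private lemma two_pow_succ_mod (k : ℕ) : 2^(k+1) % 2 = 0 := by
  simp [pow_succ, Nat.mul_mod_left]

lemma two_pow_pair_eq : ∀ a b c d : ℕ, a < b → c < d →
    2^a + 2^b = 2^c + 2^d → a = c ∧ b = d := by
  intro a
  induction a with
  | zero =>
    rintro b c d hab hcd h
    match c, hcd with
    | 0, hcd =>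
      have h0 : (2:ℕ)^0 = 1 := rfl
      have hbd : (2:ℕ)^b = 2^d := by omega
      exact ⟨rfl, Nat.pow_right_injective (le_refl 2) hbd⟩
    | (c+1), hcd =>
      exfalso
      obtain ⟨b', rfl⟩ : ∃ b', b = b' + 1 := ⟨b - 1, by omega⟩
      obtain ⟨d', rfl⟩ : ∃ d', d = d' + 1 := ⟨d - 1, by omega⟩
      have h1 := two_pow_succ_mod b'
      have h2 := two_pow_succ_mod c
      have h3 := two_pow_succ_mod d'
      have h0 : (2:ℕ)^0 = 1 := rfl
      omega
  | succ a ih =>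
    rintro b c d hab hcd h
    match c with
    | 0 =>
      exfalso
      obtain ⟨b', rfl⟩ : ∃ b', b = b' + 1 := ⟨b - 1, by omega⟩
      obtain ⟨d', rfl⟩ : ∃ d', d = d' + 1 := ⟨d - 1, by omega⟩
      have h1 := two_pow_succ_mod b'
      have h2 := two_pow_succ_mod a
      have h3 := two_pow_succ_mod d'
      have h0 : (2:ℕ)^0 = 1 := rfl
      omega
    | (c+1) =>
      obtain ⟨b', rfl⟩ : ∃ b', b = b' + 1 := ⟨b - 1, by omega⟩
      obtain ⟨d', rfl⟩ : ∃ d', d = d' + 1 := ⟨d - 1, by omega⟩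
      have e : ∀ k:ℕ, (2:ℕ)^(k+1) = 2 * 2^k := fun k => by rw [pow_succ]; ring
      have h' : 2^a + 2^b' = 2^c + 2^d' := by
        rw [e, e, e, e] at h; omega
      obtain ⟨h1, h2⟩ := ih b' c d' (by omega) (by omega) h'
      exact ⟨by omega, by omega⟩

lemma two_pow_pair_eq' {a b c d : ℕ} (hab : a ≠ b) (hcd : c ≠ d)
    (h : 2^a + 2^b = 2^c + 2^d) : (a = c ∧ b = d) ∨ (a = d ∧ b = c) := by
  rcases lt_or_gt_of_ne hab with h1 | h1 <;> rcases lt_or_gt_of_ne hcd with h2 | h2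
  · exact Or.inl (two_pow_pair_eq _ _ _ _ h1 h2 h)
  · exact Or.inr ⟨(two_pow_pair_eq a b d c h1 h2 (by omega)).1,
      (two_pow_pair_eq a b d c h1 h2 (by omega)).2⟩
  · exact Or.inr ⟨(two_pow_pair_eq b a c d h1 h2 (by omega)).2,
      (two_pow_pair_eq b a c d h1 h2 (by omega)).1⟩
  · exact Or.inl ⟨(two_pow_pair_eq b a d c h1 h2 (by omega)).2,
      (two_pow_pair_eq b a d c h1 h2 (by omega)).1⟩

lemma min'_add (A B : Finset ℕ) (hA : A.Nonempty) (hB : B.Nonempty) (h : (A+B).Nonempty) :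
    (A + B).min' h = A.min' hA + B.min' hB := by
  apply le_antisymm
  · exact Finset.min'_le _ _ (Finset.add_mem_add (Finset.min'_mem _ _) (Finset.min'_mem _ _))
  · apply Finset.le_min'
    intro y hy
    rw [Finset.mem_add] at hy
    obtain ⟨a, ha, b, hb, rfl⟩ := hy
    exact add_le_add (Finset.min'_le _ _ ha) (Finset.min'_le _ _ hb)

lemma card_odd_range : ∀ N : ℕ, ((Finset.range N).filter (fun x => x % 2 = 1)).card = N / 2 := by
  intro N; induction N with
  | zero => simp
  | succ N ih =>
    rw [Finset.range_add_one, Finset.filter_insert]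
    by_cases h : N % 2 = 1
    · rw [if_pos h, Finset.card_insert_of_notMem (by simp)]
      omega
    · rw [if_neg h]; omega

lemma card_odd_fin (N : ℕ) :
    ((Finset.univ : Finset (Fin N)).filter (fun j => j.val % 2 = 1)).card = N / 2 := by
  rw [← card_odd_range N]
  apply Finset.card_bij (fun j _ => j.val)
  · intro a ha
    simp only [Finset.mem_filter, Finset.mem_univ, true_and] at ha
    simp [a.isLt, ha]
  · intro a _ b _ h; exact Fin.val_injective h
  · intro x hx
    simp only [Finset.mem_filter, Finset.mem_range] at hx
    exact ⟨⟨x, hx.1⟩, by simp [hx.2], rfl⟩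

-- DEFS CHUNK (appended after original statement defs)
abbrev FrV (m n : ℕ) := Fin 1 ⊕ Fin m × Fin (n + 1)

def frG (m n : ℕ) : SimpleGraph (FrV m n) :=
  graphJoin (⊥ : SimpleGraph (Fin 1)) (graphCopies m (SimpleGraph.pathGraph (n + 1)))

lemma frG_adj_inl_inl {m n : ℕ} (a b : Fin 1) : ¬ (frG m n).Adj (.inl a) (.inl b) :=
  fun h => h

lemma frG_adj_inl_inr {m n : ℕ} (a : Fin 1) (p : Fin m × Fin (n + 1)) :
    (frG m n).Adj (.inl a) (.inr p) := trivial

lemma frG_adj_inr_inl {m n : ℕ} (a : Fin 1) (p : Fin m × Fin (n + 1)) :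
    (frG m n).Adj (.inr p) (.inl a) := trivial

lemma frG_adj_inr_inr {m n : ℕ} (p q : Fin m × Fin (n + 1)) :
    (frG m n).Adj (.inr p) (.inr q) ↔
      p.1 = q.1 ∧ (SimpleGraph.pathGraph (n + 1)).Adj p.2 q.2 := Iff.rfl

lemma edgeLabel_mk {V : Type*} (f : V → Finset ℕ) (u v : V) :
    edgeLabel f s(u, v) = f u + f v := rfl

def frCode (m n : ℕ) : FrV m n → ℕ
  | .inl _ => 0
  | .inr p => p.1.val * (n + 1) + p.2.val + 1

def frF (m n : ℕ) : FrV m n → Finset ℕ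
  | .inl _ => {1}
  | .inr p => if p.2.val % 2 = 1 then {2 ^ (p.1.val * (n + 1) + p.2.val + 1)}
      else {2 ^ (p.1.val * (n + 1) + p.2.val + 1), 2 ^ (p.1.val * (n + 1) + p.2.val + 1) + 1}

lemma frF_odd {m n : ℕ} {p : Fin m × Fin (n + 1)} (hp : p.2.val % 2 = 1) :
    frF m n (.inr p) = {2 ^ frCode m n (.inr p)} := by
  simp [frF, frCode, hp]

lemma frF_even {m n : ℕ} {p : Fin m × Fin (n + 1)} (hp : ¬ p.2.val % 2 = 1) :
    frF m n (.inr p) = {2 ^ frCode m n (.inr p), 2 ^ frCode m n (.inr p) + 1} := by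
  simp [frF, frCode, hp]

lemma frF_inl {m n : ℕ} (a : Fin 1) : frF m n (.inl a) = {2 ^ frCode m n (.inl a)} := rfl

lemma frF_nonempty (m n : ℕ) (v : FrV m n) : (frF m n v).Nonempty := by
  rcases v with a | p
  · exact ⟨1, by simp [frF]⟩
  · by_cases hp : p.2.val % 2 = 1
    · rw [frF_odd hp]; exact Finset.singleton_nonempty _
    · rw [frF_even hp]; exact Finset.insert_nonempty _ _

lemma frF_mem_pow (m n : ℕ) (v : FrV m n) : 2 ^ frCode m n v ∈ frF m n v := by
  rcases v with a | p
  · rw [frF_inl]; exact Finset.mem_singleton_self _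
  · by_cases hp : p.2.val % 2 = 1
    · rw [frF_odd hp]; exact Finset.mem_singleton_self _
    · rw [frF_even hp]; exact Finset.mem_insert_self _ _

lemma frF_le_pow (m n : ℕ) (v : FrV m n) : ∀ x ∈ frF m n v, 2 ^ frCode m n v ≤ x := by
  rcases v with a | p
  · intro x hx; rw [frF_inl, Finset.mem_singleton] at hx; omega
  · intro x hx
    by_cases hp : p.2.val % 2 = 1
    · rw [frF_odd hp, Finset.mem_singleton] at hx; omega
    · rw [frF_even hp, Finset.mem_insert, Finset.mem_singleton] at hx
      rcases hx with rfl | rfl <;> omega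

lemma frCode_injective (m n : ℕ) : Function.Injective (frCode m n) := by
  rintro (a | ⟨i, j⟩) (b | ⟨i', j'⟩) h
  · exact congrArg Sum.inl (Subsingleton.elim a b)
  · exfalso; simp only [frCode] at h; omega
  · exfalso; simp only [frCode] at h; omega
  · simp only [frCode] at h
    have hj := j.isLt; have hj' := j'.isLt
    have h' : (n + 1) * i.val + j.val = (n + 1) * i'.val + j'.val := by
      rw [mul_comm ((n:ℕ)+1) i.val, mul_comm ((n:ℕ)+1) i'.val]; omega
    have hi : i.val = i'.val := by
      rcases Nat.lt_trichotomy i.val i'.val with hlt | he | hlt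
      · exfalso
        have : (n + 1) * i.val + j.val < (n + 1) * i'.val := by
          calc (n + 1) * i.val + j.val < (n + 1) * i.val + (n + 1) := by omega
            _ = (n + 1) * (i.val + 1) := by ring
            _ ≤ (n + 1) * i'.val := Nat.mul_le_mul_left _ (by omega)
        omega
      · exact he
      · exfalso
        have : (n + 1) * i'.val + j'.val < (n + 1) * i.val := by
          calc (n + 1) * i'.val + j'.val < (n + 1) * i'.val + (n + 1) := by omega
            _ = (n + 1) * (i'.val + 1) := by ring
            _ ≤ (n + 1) * i.val := Nat.mul_le_mul_left _ (by omega)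
        omega
    have hjj : j.val = j'.val := by
      rw [hi] at h'; omega
    have : i = i' := Fin.val_injective hi
    have : j = j' := Fin.val_injective hjj
    subst this; subst ‹i = i'›
    rfl

lemma frF_card_odd {m n : ℕ} {p : Fin m × Fin (n + 1)} (hp : p.2.val % 2 = 1) :
    (frF m n (.inr p)).card = 1 := by
  rw [frF_odd hp]; exact Finset.card_singleton _

lemma frF_card_even {m n : ℕ} {p : Fin m × Fin (n + 1)} (hp : ¬ p.2.val % 2 = 1) :
    (frF m n (.inr p)).card = 2 := by
  rw [frF_even hp]; exact Finset.card_pair (by omega)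

lemma frSum_mem (m n : ℕ) (u v : FrV m n) :
    2 ^ frCode m n u + 2 ^ frCode m n v ∈ frF m n u + frF m n v :=
  Finset.add_mem_add (frF_mem_pow m n u) (frF_mem_pow m n v)

lemma frSum_le (m n : ℕ) (u v : FrV m n) :
    ∀ z ∈ frF m n u + frF m n v, 2 ^ frCode m n u + 2 ^ frCode m n v ≤ z := by
  intro z hz
  rw [Finset.mem_add] at hz
  obtain ⟨a, ha, b, hb, rfl⟩ := hz
  exact add_le_add (frF_le_pow m n u a ha) (frF_le_pow m n v b hb)

lemma frF_injective (m n : ℕ) : Function.Injective (frF m n) := by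
  intro u v h
  have h1 := frF_le_pow m n v _ (h ▸ frF_mem_pow m n u)
  have h2 := frF_le_pow m n u _ (h.symm ▸ frF_mem_pow m n v)
  exact frCode_injective m n
    (Nat.pow_right_injective (le_refl 2) (le_antisymm h2 h1))

lemma frF_weak (m n : ℕ) : IsWeakIASI (frG m n) (frF m n) := by
  refine ⟨⟨frF_nonempty m n, frF_injective m n, ?_⟩, ?_⟩
  · -- edge injectivity
    have key : ∀ (x y : Sym2 (FrV m n)), x ∈ (frG m n).edgeSet → y ∈ (frG m n).edgeSet →
        edgeLabel (frF m n) x = edgeLabel (frF m n) y → x = y := by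
      intro x y
      induction x using Sym2.ind with | _ u v =>
      induction y using Sym2.ind with | _ u' v' =>
      intro hx hy heq
      have hadj := (SimpleGraph.mem_edgeSet (G := frG m n)).mp hx
      have hadj' := (SimpleGraph.mem_edgeSet (G := frG m n)).mp hy
      rw [edgeLabel_mk, edgeLabel_mk] at heq
      have h1 : 2 ^ frCode m n u + 2 ^ frCode m n v
          = 2 ^ frCode m n u' + 2 ^ frCode m n v' := by
        refine le_antisymm (frSum_le m n u v _ ?_) (frSum_le m n u' v' _ ?_)
        · rw [heq]; exact frSum_mem m n u' v'
        · rw [← heq]; exact frSum_mem m n u v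
      have hcc : frCode m n u ≠ frCode m n v :=
        fun hc => hadj.ne (frCode_injective m n hc)
      have hcc' : frCode m n u' ≠ frCode m n v' :=
        fun hc => hadj'.ne (frCode_injective m n hc)
      rcases two_pow_pair_eq' hcc hcc' h1 with ⟨ha, hb⟩ | ⟨ha, hb⟩
      · rw [frCode_injective m n ha, frCode_injective m n hb]
      · rw [frCode_injective m n ha, frCode_injective m n hb]
        exact Sym2.eq_swap
    exact fun x hx y hy heq => key x y hx hy heq
  · -- weakness
    rintro (a | p) (b | q) h
    · exact (frG_adj_inl_inl a b h).elim
    · rw [frF_inl, Finset.card_singleton_add, Finset.card_singleton]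
      have := (frF_nonempty m n (.inr q)).card_pos
      omega
    · rw [frF_inl, Finset.card_add_singleton, Finset.card_singleton]
      have := (frF_nonempty m n (.inr p)).card_pos
      omega
    · obtain ⟨h1, h2⟩ := (frG_adj_inr_inr p q).mp h
      rw [SimpleGraph.pathGraph_adj] at h2
      by_cases hp : p.2.val % 2 = 1
      · have hq : ¬ q.2.val % 2 = 1 := by omega
        rw [frF_odd hp, Finset.card_singleton_add, Finset.card_singleton,
          frF_card_even hq]
        omega
      · have hq : q.2.val % 2 = 1 := by omega
        rw [frF_odd hq, Finset.card_add_singleton, Finset.card_singleton,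
          frF_card_even hp]
        omega

lemma frPsi_injective (m n : ℕ) : Function.Injective
    (fun p : Fin m × Fin (n + 1) => s((Sum.inl 0 : FrV m n), Sum.inr p)) := by
  intro p q h
  rw [Sym2.eq_iff] at h
  rcases h with ⟨-, h⟩ | ⟨h, -⟩
  · exact Sum.inr.inj h
  · exact absurd h (by simp)

lemma frF_count (m n : ℕ) :
    monoEdgeCount (frG m n) (frF m n) = m * ((n + 1) / 2) := by
  have hset : {e ∈ (frG m n).edgeSet | (edgeLabel (frF m n) e).card = 1}
      = (fun p : Fin m × Fin (n + 1) => s((Sum.inl 0 : FrV m n), Sum.inr p)) ''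
        {p : Fin m × Fin (n + 1) | p.2.val % 2 = 1} := by
    ext e
    induction e using Sym2.ind with | _ u v =>
    constructor
    · rintro ⟨he, hc⟩
      have hadj := (SimpleGraph.mem_edgeSet (G := frG m n)).mp he
      rw [edgeLabel_mk] at hc
      rcases u with a | p <;> rcases v with b | q
      · exact (frG_adj_inl_inl a b hadj).elim
      · have hq : q.2.val % 2 = 1 := by
          by_contra hq
          rw [frF_inl, Finset.card_singleton_add, frF_card_even hq] at hc
          omega
        refine ⟨q, hq, ?_⟩
        have ha : a = 0 := Subsingleton.elim a 0
        rw [ha]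
      · have hp : p.2.val % 2 = 1 := by
          by_contra hp
          rw [frF_inl, Finset.card_add_singleton, frF_card_even hp] at hc
          omega
        refine ⟨p, hp, ?_⟩
        have hb : b = 0 := Subsingleton.elim b 0
        rw [hb, Sym2.eq_swap]
      · exfalso
        obtain ⟨h1, h2⟩ := (frG_adj_inr_inr p q).mp hadj
        rw [SimpleGraph.pathGraph_adj] at h2
        by_cases hp : p.2.val % 2 = 1
        · have hq : ¬ q.2.val % 2 = 1 := by omega
          rw [frF_odd hp, Finset.card_singleton_add, frF_card_even hq] at hc
          omega
        · have hq : q.2.val % 2 = 1 := by omega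
          rw [frF_odd hq, Finset.card_add_singleton, frF_card_even hp] at hc
          omega
    · rintro ⟨p, hp, heq⟩
      rw [← heq]
      refine ⟨(SimpleGraph.mem_edgeSet (G := frG m n)).mpr (frG_adj_inl_inr 0 p), ?_⟩
      rw [edgeLabel_mk, frF_inl, frF_odd hp]
      simp [Finset.singleton_add]
  unfold monoEdgeCount
  rw [hset, Set.ncard_image_of_injective _ (frPsi_injective m n)]
  have h2 : {p : Fin m × Fin (n + 1) | p.2.val % 2 = 1}
      = ↑(Finset.univ.filter (fun p : Fin m × Fin (n + 1) => p.2.val % 2 = 1)) := by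
    ext p; simp
  rw [h2, Set.ncard_coe_finset]
  have h3 : Finset.univ.filter (fun p : Fin m × Fin (n + 1) => p.2.val % 2 = 1)
      = (Finset.univ : Finset (Fin m)) ×ˢ
        (Finset.univ.filter (fun j : Fin (n + 1) => j.val % 2 = 1)) := by
    ext ⟨i, j⟩
    simp
  rw [h3, Finset.card_product, Finset.card_univ, Fintype.card_fin, card_odd_fin]

lemma weak_adj_mono {V : Type*} {G : SimpleGraph V} {f : V → Finset ℕ}
    (h : IsWeakIASI G f) {u v : V} (huv : G.Adj u v) :
    (f u).card = 1 ∨ (f v).card = 1 := by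
  by_contra hcon
  push_neg at hcon
  have h1 := (h.nonempty u).card_pos
  have h2 := (h.nonempty v).card_pos
  have h3 := cauchy_davenport_add_of_linearOrder_isCancelAdd (h.nonempty u) (h.nonempty v)
  have h4 := h.weak huv
  have h5 := le_max_left (f u).card (f v).card
  have h6 := le_max_right (f u).card (f v).card
  rcases max_choice (f u).card (f v).card with h7 | h7 <;>
    rw [h7] at h4 <;> omega

/-- For integers `m, n > 1`, the sparing number of the `(m,n)`-friendship graph
`K_1 + mP_n` is `m·⌊(n+1)/2⌋`, where `P_n` is the path of length `n`
(with `n` edges and `n+1` vertices), i.e. `SimpleGraph.pathGraph (n+1)`. -/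
theorem friendship_path_sparingNumber (m n : ℕ) (hm : 1 < m) (hn : 1 < n) :
    sparingNumber
      (graphJoin (⊥ : SimpleGraph (Fin 1))
        (graphCopies m (SimpleGraph.pathGraph (n + 1)))) = m * ((n + 1) / 2) := by
  show sparingNumber (frG m n) = m * ((n + 1) / 2)
  have hmem : m * ((n + 1) / 2) ∈
      {k | ∃ f : FrV m n → Finset ℕ, IsWeakIASI (frG m n) f ∧ monoEdgeCount (frG m n) f = k} :=
    ⟨frF m n, frF_weak m n, frF_count m n⟩
  apply le_antisymm
  · exact Nat.sInf_le hmem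
  · apply le_csInf ⟨_, hmem⟩
    rintro k ⟨f, hf, rfl⟩
    classical
    by_cases hcard : (f (Sum.inl (0 : Fin 1))).card = 1
    · -- center is mono
      set A := Finset.univ.filter
        (fun p : Fin m × Fin (n + 1) => (f (Sum.inr p)).card = 1) with hA
      set T := Finset.univ.filter
        (fun p : Fin m × Fin (n + 1) => ¬ (f (Sum.inr p)).card = 1) with hT
      have hTcard : T.card ≤ m * (n / 2 + 1) := by
        have hle : T.card ≤ ((Finset.univ : Finset (Fin m)) ×ˢ Finset.range (n / 2 + 1)).card := by
          apply Finset.card_le_card_of_injOn (fun p => (p.1, p.2.val / 2))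
          · intro p hp
            simp only [Finset.mem_coe, Finset.mem_product, Finset.mem_univ, Finset.mem_range, true_and]
            have := p.2.isLt
            omega
          · intro p hp q hq hpq
            simp only [Prod.mk.injEq] at hpq
            obtain ⟨h1, h2⟩ := hpq
            simp only [hT, Finset.coe_filter, Set.mem_setOf_eq, Finset.mem_univ,
              true_and] at hp hq
            by_contra hne
            have hj : p.2.val ≠ q.2.val := by
              intro hv
              exact hne (Prod.ext h1 (Fin.val_injective hv))
            have hadj : (frG m n).Adj (Sum.inr p) (Sum.inr q) := by
              refine (frG_adj_inr_inr p q).mpr ⟨h1, ?_⟩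
              rw [SimpleGraph.pathGraph_adj]
              omega
            rcases weak_adj_mono hf hadj with h | h
            · exact hp h
            · exact hq h
        simpa [Finset.card_product, Finset.card_range] using hle
      have hsum : A.card + T.card = m * (n + 1) := by
        rw [hA, hT, Finset.card_filter_add_card_filter_not]
        simp
      have hsplit : m * (n + 1) = m * ((n + 1) / 2) + m * (n / 2 + 1) := by
        have h0 : (n + 1) / 2 + (n / 2 + 1) = n + 1 := by omega
        calc m * (n + 1) = m * ((n + 1) / 2 + (n / 2 + 1)) := by rw [h0]
          _ = _ := Nat.mul_add m _ _
      have hsub : (fun p : Fin m × Fin (n + 1) => s((Sum.inl 0 : FrV m n), Sum.inr p)) '' ↑A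
          ⊆ {e ∈ (frG m n).edgeSet | (edgeLabel f e).card = 1} := by
        rintro e ⟨p, hp, rfl⟩
        simp only [hA, Finset.coe_filter, Set.mem_setOf_eq, Finset.mem_univ, true_and] at hp
        refine ⟨(SimpleGraph.mem_edgeSet (G := frG m n)).mpr (frG_adj_inl_inr 0 p), ?_⟩
        rw [edgeLabel_mk]
        obtain ⟨x, hx⟩ := Finset.card_eq_one.mp hcard
        obtain ⟨y, hy⟩ := Finset.card_eq_one.mp hp
        rw [hx, hy]
        simp [Finset.singleton_add]
      have hmc : A.card ≤ monoEdgeCount (frG m n) f := by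
        unfold monoEdgeCount
        calc A.card
            = ((fun p : Fin m × Fin (n + 1) =>
                s((Sum.inl 0 : FrV m n), Sum.inr p)) '' ↑A).ncard := by
              rw [Set.ncard_image_of_injective _ (frPsi_injective m n), Set.ncard_coe_finset]
          _ ≤ _ := Set.ncard_le_ncard hsub (Set.toFinite _)
      omega
    · -- center is not mono; all path vertices are mono
      have hall : ∀ p : Fin m × Fin (n + 1), (f (Sum.inr p)).card = 1 := by
        intro p
        rcases weak_adj_mono hf (frG_adj_inl_inr 0 p) with h | h
        · exact absurd h hcard
        · exact h
      have hinj2 : Function.Injective (fun q : Fin m × Fin n =>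
          s((Sum.inr (q.1, q.2.castSucc) : FrV m n), Sum.inr (q.1, q.2.succ))) := by
        rintro ⟨i, k⟩ ⟨i', k'⟩ h
        rw [Sym2.eq_iff] at h
        rcases h with ⟨h1, h2⟩ | ⟨h1, h2⟩
        · simp only [Sum.inr.injEq, Prod.mk.injEq] at h1
          exact Prod.ext h1.1 (Fin.castSucc_inj.mp h1.2)
        · exfalso
          simp only [Sum.inr.injEq, Prod.mk.injEq] at h1 h2
          have e1 := congrArg Fin.val h1.2
          have e2 := congrArg Fin.val h2.2
          simp only [Fin.coe_castSucc, Fin.val_succ] at e1 e2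
          omega
      have hsub : (fun q : Fin m × Fin n =>
          s((Sum.inr (q.1, q.2.castSucc) : FrV m n), Sum.inr (q.1, q.2.succ))) '' Set.univ
            ⊆ {e ∈ (frG m n).edgeSet | (edgeLabel f e).card = 1} := by
        rintro e ⟨⟨i, k⟩, -, rfl⟩
        refine ⟨?_, ?_⟩
        · apply (SimpleGraph.mem_edgeSet (G := frG m n)).mpr
          refine (frG_adj_inr_inr _ _).mpr ⟨rfl, ?_⟩
          rw [SimpleGraph.pathGraph_adj]
          left
          simp [Fin.coe_castSucc, Fin.val_succ]
        · rw [edgeLabel_mk]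
          obtain ⟨x, hx⟩ := Finset.card_eq_one.mp (hall (i, k.castSucc))
          obtain ⟨y, hy⟩ := Finset.card_eq_one.mp (hall (i, k.succ))
          rw [hx, hy]
          simp [Finset.singleton_add]
      have hmn : m * n ≤ monoEdgeCount (frG m n) f := by
        unfold monoEdgeCount
        calc m * n = (Set.univ : Set (Fin m × Fin n)).ncard := by
              simp [Set.ncard_univ, Nat.card_eq_fintype_card]
          _ = ((fun q : Fin m × Fin n =>
                s((Sum.inr (q.1, q.2.castSucc) : FrV m n), Sum.inr (q.1, q.2.succ))) ''
                  Set.univ).ncard := (Set.ncard_image_of_injective _ hinj2).symm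
          _ ≤ _ := Set.ncard_le_ncard hsub (Set.toFinite _)
      have : m * ((n + 1) / 2) ≤ m * n := Nat.mul_le_mul_left _ (by omega)
      omega
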